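/- Let n ≥ 1 and k ≥ 2, and let p, q : Fin k → EuclideanSpace ℝ (Fin n) be two collections of points with the same centroid, i.e. ∑ i, p i = ∑ i, q i. If the last point q k lies in the convex hull (over ℝ) of the set {p 1, …, p k}, then the centroid (1/(k−1)) • ∑_{i=1}^{k−1} q i of the remaining points q 1, …, q_{k−1} also lies in the convex hull of {p 1, …, p k}. (Paper: Lemma 3.5.) -/

import Mathlib

/-- **Lemma 3.5.** Two collections of `k` points in `ℝⁿ` with the same centroid: if the
last point of `q` lies in the convex hull of the points of `p`, then the centroid of the
remaining `k - 1` points of `q` also lies in that convex hull. -/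
theorem centroid_mem_convexHull_of_last_mem
    (n k : ℕ) (hn : 1 ≤ n) (hk : 2 ≤ k)
    (p q : Fin k → EuclideanSpace ℝ (Fin n))
    (hsum : ∑ i, p i = ∑ i, q i)
    (hq : q ⟨k - 1, by omega⟩ ∈ convexHull ℝ (Set.range p)) :
    (1 / ((k : ℝ) - 1)) • ∑ i : Fin (k - 1), q (Fin.castLE (Nat.sub_le k 1) i) ∈
      convexHull ℝ (Set.range p) := by
  obtain ⟨m, rfl⟩ : ∃ m, k = m + 1 := ⟨k - 1, by omega⟩
  have hm : 1 ≤ m := by omega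
  have hmR : (0 : ℝ) < m := by exact_mod_cast hm
  -- extract weights for q_last
  rw [convexHull_range_eq_exists_affineCombination] at hq
  obtain ⟨s, w, hw0, hw1, hwa⟩ := hq
  have hwa' : (Finset.affineCombination ℝ s p) w = q ⟨m, by omega⟩ := hwa
  show (1 / ((↑(m + 1) : ℝ) - 1)) •
      ∑ i : Fin m, q (Fin.castLE (Nat.sub_le (m + 1) 1) i) ∈ convexHull ℝ (Set.range p)
  set w' : Fin (m + 1) → ℝ := fun i => if i ∈ s then w i else 0 with hw'def
  have hw'0 : ∀ i, 0 ≤ w' i := by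
    intro i; simp only [hw'def]
    split
    · exact hw0 _ ‹_›
    · exact le_refl 0
  have hw'1 : ∑ i, w' i = 1 := by
    rw [hw'def, ← hw1]
    exact Finset.sum_ite_mem Finset.univ s w ▸ by
      rw [Finset.univ_inter]
  have hw'le : ∀ i, w' i ≤ 1 := by
    intro i
    calc w' i ≤ ∑ j, w' j := Finset.single_le_sum (fun j _ => hw'0 j) (Finset.mem_univ i)
    _ = 1 := hw'1
  have hqlast : q ⟨m, by omega⟩ = ∑ i, w' i • p i := by
    rw [← hwa', affineCombination_eq_centerMass hw1,
      Finset.centerMass_eq_of_sum_1 _ _ hw1]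
    rw [← Finset.sum_subset (Finset.subset_univ s)]
    · exact Finset.sum_congr rfl fun i hi => by simp [hw'def, hi]
    · intro i _ hi
      simp [hw'def, hi]
  -- rewrite the partial sum
  have hsplit : ∑ i : Fin (m + 1), q i
      = (∑ i : Fin m, q (Fin.castLE (Nat.sub_le (m + 1) 1) i)) + q ⟨m, by omega⟩ := by
    rw [Fin.sum_univ_castSucc]
    rfl
  have hS : ∑ i : Fin m, q (Fin.castLE (Nat.sub_le (m + 1) 1) i)
      = ∑ i, (1 - w' i) • p i := by
    have : ∑ i : Fin m, q (Fin.castLE (Nat.sub_le (m + 1) 1) i)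
        = ∑ i, q i - q ⟨m, by omega⟩ := by
      rw [hsplit]; abel
    rw [this, ← hsum, hqlast, ← Finset.sum_sub_distrib]
    refine Finset.sum_congr rfl fun i _ => ?_
    rw [sub_smul, one_smul]
  -- express target as centerMass
  set u : Fin (m + 1) → ℝ := fun i => (1 - w' i) / m with hudef
  have hu0 : ∀ i ∈ Finset.univ, 0 ≤ u i := fun i _ =>
    div_nonneg (by linarith [hw'le i]) hmR.le
  have hu1 : ∑ i, u i = 1 := by
    simp only [hudef]
    rw [← Finset.sum_div, Finset.sum_sub_distrib, hw'1, Finset.sum_const,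
      Finset.card_univ, Fintype.card_fin]
    field_simp
    rw [nsmul_eq_mul]; push_cast; ring
  have key : (1 / ((↑(m + 1) : ℝ) - 1)) • ∑ i : Fin m, q (Fin.castLE (Nat.sub_le (m + 1) 1) i)
      = ∑ i, u i • p i := by
    rw [hS, Finset.smul_sum]
    refine Finset.sum_congr rfl fun i _ => ?_
    rw [smul_smul, hudef]
    push_cast
    congr 1
    field_simp
    rw [add_sub_cancel_right, mul_div_cancel_left₀ _ hmR.ne']
  rw [key, ← Finset.centerMass_eq_of_sum_1 _ _ hu1]
  exact Finset.centerMass_mem_convexHull _ hu0 (by rw [hu1]; norm_num)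
    (fun i _ => Set.mem_range_self i)
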